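/- Let $\mu, \bar\mu \in \Delta^n$, $k \ge 1$, and define $B(\nu) = \frac{1}{k}(\mathrm{diag}(\nu) - \nu\nu^\top)$. Let $\mu_1,\ldots,\mu_N \in \Delta^n$ with $\bar\mu = \frac{1}{N}\sum_i \mu_i$ and $\|\mu_i - \bar\mu\|_1 \le \omega$ for all $i$. Then for any symmetric matrix $\Sigma$ with entries bounded by 1 in absolute value, $\left|\left\langle \Sigma,\ \frac{1}{N}\sum_{i=1}^N B(\mu_i) - B(\bar\mu)\right\rangle\right| \le \omega^2/k$. -/

import Mathlib

theorem stmt_17 (n N k : ℕ) (hk : 1 ≤ k) (hN : 0 < N) (ω : ℝ) (hω : 0 ≤ ω)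
    (μs : Fin N → Fin n → ℝ) (hμs : ∀ i, (∀ a, 0 ≤ μs i a) ∧ ∑ a, μs i a = 1)
    (μbar : Fin n → ℝ) (hbar : ∀ a, μbar a = (1 / N) * ∑ i, μs i a)
    (hclose : ∀ i, ∑ a, |μs i a - μbar a| ≤ ω)
    (S : Matrix (Fin n) (Fin n) ℝ) (hsym : S.IsSymm) (hbd : ∀ a b, |S a b| ≤ 1)
    (B : (Fin n → ℝ) → Matrix (Fin n) (Fin n) ℝ)
    (hB : ∀ ν a b, B ν a b = (1 / k) * ((if a = b then ν a else 0) - ν a * ν b)) :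
    |∑ a, ∑ b, S a b * ((1 / N) * (∑ i, B (μs i) a b) - B μbar a b)| ≤ ω ^ 2 / k := by
  have hNr : (0:ℝ) < N := by exact_mod_cast hN
  have hkr : (0:ℝ) < k := by exact_mod_cast hk
  have hsum : ∀ a, ∑ i, μs i a = (N:ℝ) * μbar a := by
    intro a; rw [hbar a]; field_simp
  have key : ∀ a b, (1 / N) * (∑ i, B (μs i) a b) - B μbar a b
      = -(1/(k*N)) * ∑ i, (μs i a - μbar a) * (μs i b - μbar b) := by
    intro a b
    have e1 : ∑ i, B (μs i) a b
        = (1/k) * ((if a = b then (N:ℝ) * μbar a else 0) - ∑ i, μs i a * μs i b) := by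
      simp only [hB]
      rw [← Finset.mul_sum, Finset.sum_sub_distrib]
      congr 2
      split <;> simp [hsum]
    have e2 : ∑ i, (μs i a - μbar a) * (μs i b - μbar b)
        = (∑ i, μs i a * μs i b) - N * (μbar a * μbar b) := by
      simp only [sub_mul, mul_sub, Finset.sum_sub_distrib, ← Finset.sum_mul,
        ← Finset.mul_sum, hsum a, hsum b, Finset.sum_const, Finset.card_univ,
        Fintype.card_fin, nsmul_eq_mul]
      ring
    rw [e1, e2, hB]
    split_ifs with h <;> (field_simp; ring)
  have main : (∑ a, ∑ b, S a b * ((1 / N) * (∑ i, B (μs i) a b) - B μbar a b))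
      = -(1/(k*N)) * ∑ i, ∑ a, ∑ b,
          S a b * ((μs i a - μbar a) * (μs i b - μbar b)) := by
    have step : ∀ a b, S a b * ((1 / N) * (∑ i, B (μs i) a b) - B μbar a b)
        = ∑ i, -(1/(k*N)) * (S a b * ((μs i a - μbar a) * (μs i b - μbar b))) := by
      intro a b
      rw [key a b, mul_left_comm, Finset.mul_sum, Finset.mul_sum]
    simp only [step]
    simp only [Finset.mul_sum]
    calc ∑ a, ∑ b, ∑ i, -(1/((k:ℝ)*N)) * (S a b * ((μs i a - μbar a) * (μs i b - μbar b)))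
        = ∑ a, ∑ i, ∑ b, -(1/((k:ℝ)*N)) * (S a b * ((μs i a - μbar a) * (μs i b - μbar b))) :=
          Finset.sum_congr rfl fun a _ => Finset.sum_comm
      _ = ∑ i, ∑ a, ∑ b, -(1/((k:ℝ)*N)) * (S a b * ((μs i a - μbar a) * (μs i b - μbar b))) :=
          Finset.sum_comm
  rw [main, abs_mul, abs_neg, abs_of_pos (by positivity : (0:ℝ) < 1/(k*N))]
  have hQ : ∀ i, |∑ a, ∑ b, S a b * ((μs i a - μbar a) * (μs i b - μbar b))| ≤ ω^2 := by
    intro i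
    have h1 : |∑ a, ∑ b, S a b * ((μs i a - μbar a) * (μs i b - μbar b))|
        ≤ ∑ a, ∑ b, |S a b * ((μs i a - μbar a) * (μs i b - μbar b))| :=
      (Finset.abs_sum_le_sum_abs _ _).trans
        (Finset.sum_le_sum fun a _ => Finset.abs_sum_le_sum_abs _ _)
    refine h1.trans ?_
    have h2 : ∑ a, ∑ b, |S a b * ((μs i a - μbar a) * (μs i b - μbar b))|
        ≤ ∑ a, ∑ b, |μs i a - μbar a| * |μs i b - μbar b| := by
      refine Finset.sum_le_sum fun a _ => Finset.sum_le_sum fun b _ => ?_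
      rw [abs_mul, abs_mul]
      calc |S a b| * (|μs i a - μbar a| * |μs i b - μbar b|)
          ≤ 1 * (|μs i a - μbar a| * |μs i b - μbar b|) :=
            mul_le_mul_of_nonneg_right (hbd a b) (by positivity)
        _ = _ := one_mul _
    refine h2.trans ?_
    rw [← Finset.sum_mul_sum]
    calc (∑ a, |μs i a - μbar a|) * (∑ b, |μs i b - μbar b|)
        ≤ ω * ω := mul_le_mul (hclose i) (hclose i)
          (Finset.sum_nonneg fun _ _ => abs_nonneg _) hω
      _ = ω ^ 2 := (sq ω).symm
  have hT : |∑ i, ∑ a, ∑ b, S a b * ((μs i a - μbar a) * (μs i b - μbar b))|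
      ≤ N * ω ^ 2 := by
    refine (Finset.abs_sum_le_sum_abs _ _).trans ?_
    calc ∑ i, |∑ a, ∑ b, S a b * ((μs i a - μbar a) * (μs i b - μbar b))|
        ≤ ∑ _i : Fin N, ω ^ 2 := Finset.sum_le_sum fun i _ => hQ i
      _ = N * ω ^ 2 := by simp [Finset.sum_const, mul_comm]
  calc 1/((k:ℝ)*N) * |∑ i, ∑ a, ∑ b, S a b * ((μs i a - μbar a) * (μs i b - μbar b))|
      ≤ 1/((k:ℝ)*N) * (N * ω ^ 2) := by
        exact mul_le_mul_of_nonneg_left hT (by positivity)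
    _ = ω ^ 2 / k := by field_simp
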